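/- Let η₁, η₂ be reals with η₁ > 4η₂ > 0, let ℓ > 0, and suppose m₁, …, m_r ∈ [0, η₂ℓ] satisfy m₁ + … + m_r ≥ η₁ℓ. If X₁, …, X_r are independent random variables such that each X_j takes only the values 0 and m_j and Pr[X_j = m_j] ≥ 1/2, then Pr[X₁ + … + X_r ≥ η₂ℓ] ≥ 1 − exp(−η₁/(8η₂)). -/

import Mathlib

open Finset

namespace TournamentPartition

/-! ### Basic constants from the paper -/

def rho : ℕ := 10 ^ 4
def sigma1 : ℕ := 10 ^ 60
def sigma2 : ℕ := 10 ^ 4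
def sigma3 : ℕ := 10

/-- `s` contains at least `m` elements satisfying `P`. -/
def ManyIn {α : Type*} (s : Finset α) (m : ℝ) (P : α → Prop) : Prop :=
  ∃ s' : Finset α, s' ⊆ s ∧ m ≤ (s'.card : ℝ) ∧ ∀ x ∈ s', P x

section Defs

variable {V I : Type*}

/-- `E u v` means that the edge between `u` and `v` is directed from `u` to `v`. -/
def IsTournament (E : V → V → Prop) : Prop :=
  (∀ v, ¬ E v v) ∧ ∀ u v : V, u ≠ v → (E u v ↔ ¬ E v u)

/-- There is a directed path from `u` to `v` all of whose vertices lie in `S`. -/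
def ReachWithin (E : V → V → Prop) (S : Set V) (u v : V) : Prop :=
  Relation.ReflTransGen (fun a b => a ∈ S ∧ b ∈ S ∧ E a b) u v

def StronglyConnectedOn (E : V → V → Prop) (S : Set V) : Prop :=
  ∀ u ∈ S, ∀ v ∈ S, ReachWithin E S u v

/-- A directed path, as a list of distinct vertices with consecutive edges. -/
def IsDiPath (E : V → V → Prop) (l : List V) : Prop :=
  l ≠ [] ∧ l.Nodup ∧ l.Chain' E

variable [Fintype V] [DecidableEq V]

/-- The set `S` induces a strongly `k`-connected subtournament. -/
def StronglyKConnectedOn (E : V → V → Prop) (k : ℕ) (S : Finset V) : Prop :=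
  k + 1 ≤ S.card ∧
    ∀ Z : Finset V, Z.card ≤ k → StronglyConnectedOn E ((S \ Z : Finset V) : Set V)

def StronglyKConnected (E : V → V → Prop) (k : ℕ) : Prop :=
  StronglyKConnectedOn E k Finset.univ

def outN (E : V → V → Prop) [DecidableRel E] (u : V) : Finset V :=
  Finset.univ.filter fun v => E u v

def inN (E : V → V → Prop) [DecidableRel E] (u : V) : Finset V :=
  Finset.univ.filter fun v => E v u

/-- A system of gadgets `U(α)` with special sets `S⁺(α), S⁻(α) ⊆ S(α) ⊆ U(α)`,
exceptional sets `X(α)` and special vertices `s⁺(α), s⁻(α) ∈ S(α)`. -/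
structure GadgetSystem (V I : Type*) where
  U : I → Finset V
  S : I → Finset V
  Sp : I → Finset V
  Sm : I → Finset V
  X : I → Finset V
  sp : I → V
  sm : I → V
  sp_mem : ∀ α, sp α ∈ S α
  sm_mem : ∀ α, sm α ∈ S α
  Sp_subset : ∀ α, Sp α ⊆ S α
  Sm_subset : ∀ α, Sm α ⊆ S α
  S_subset : ∀ α, S α ⊆ U α

variable [Fintype I] [DecidableEq I]

def Vokay (G : GadgetSystem V I) : Finset V :=
  Finset.univ \ Finset.univ.biUnion G.S

/-- Vertices of `V_okay` having no out-neighbour in `S⁻(α)` for at least `k*t` indices `α`. -/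
def VbadP (E : V → V → Prop) [DecidableRel E] (G : GadgetSystem V I) (k t : ℕ) : Finset V :=
  (Vokay G).filter fun u =>
    k * t ≤ (Finset.univ.filter fun α : I => ∀ v ∈ G.Sm α, ¬ E u v).card

/-- Vertices of `V_okay` having no in-neighbour in `S⁺(α)` for at least `k*t` indices `α`. -/
def VbadM (E : V → V → Prop) [DecidableRel E] (G : GadgetSystem V I) (k t : ℕ) : Finset V :=
  (Vokay G).filter fun u =>
    k * t ≤ (Finset.univ.filter fun α : I => ∀ v ∈ G.Sp α, ¬ E v u).card

def Vbad (E : V → V → Prop) [DecidableRel E] (G : GadgetSystem V I) (k t : ℕ) : Finset V :=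
  VbadP E G k t ∩ VbadM E G k t

def VgoodP (E : V → V → Prop) [DecidableRel E] (G : GadgetSystem V I) (k t : ℕ) : Finset V :=
  Vokay G \ VbadP E G k t

def VgoodM (E : V → V → Prop) [DecidableRel E] (G : GadgetSystem V I) (k t : ℕ) : Finset V :=
  Vokay G \ VbadM E G k t

def Vgood (E : V → V → Prop) [DecidableRel E] (G : GadgetSystem V I) (k t : ℕ) : Finset V :=
  VgoodP E G k t ∩ VgoodM E G k t

/-- `W(C) = V ∖ ⋃_{α ∈ C} U(α)`. -/
def Wof (G : GadgetSystem V I) (C : Finset I) : Finset V :=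
  Finset.univ \ C.biUnion G.U

def NokayP (E : V → V → Prop) [DecidableRel E] (G : GadgetSystem V I) (u : V) : Finset V :=
  outN E u ∩ Vokay G

def NokayM (E : V → V → Prop) [DecidableRel E] (G : GadgetSystem V I) (u : V) : Finset V :=
  inN E u ∩ Vokay G

def NgoodP (E : V → V → Prop) [DecidableRel E] (G : GadgetSystem V I) (k t : ℕ) (u : V) :
    Finset V :=
  outN E u ∩ VgoodP E G k t

def NgoodM (E : V → V → Prop) [DecidableRel E] (G : GadgetSystem V I) (k t : ℕ) (u : V) :
    Finset V :=
  inN E u ∩ Vgood E G k t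

/-! ### Properties (G1)–(G9) -/

def CondG1 (G : GadgetSystem V I) : Prop :=
  ∀ α β : I, α ≠ β → Disjoint (G.U α) (G.U β)

def CondG2 (G : GadgetSystem V I) (k t : ℕ) : Prop :=
  ∀ α : I, (G.S α).card ≤ rho ∧ (G.X α).card ≤ rho * sigma1 * k * t

def CondG3 (E : V → V → Prop) (G : GadgetSystem V I) : Prop :=
  ∀ α : I, ∀ u ∈ G.Sm α, ∀ v ∈ G.Sp α, ReachWithin E (G.U α : Set V) u v

def CondG4 (E : V → V → Prop) (G : GadgetSystem V I) : Prop :=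
  ∀ α : I, ∀ x : V, x ∉ G.X α →
    (E x (G.sp α) → ∀ u ∈ G.U α \ G.S α, E x u) ∧
    (E (G.sm α) x → ∀ u ∈ G.U α \ G.S α, E u x)

def CondG5 (E : V → V → Prop) [DecidableRel E] (G : GadgetSystem V I) (k t : ℕ) : Prop :=
  ∀ u ∈ Vokay G,
    10 ^ 12 * (VbadP E G k t).card ≤ (outN E u).card ∧
    10 ^ 12 * (VbadM E G k t).card ≤ (inN E u).card

/-- Properties (G1)–(G5) of a gadget system. -/
def GadgetHyp (E : V → V → Prop) [DecidableRel E] (G : GadgetSystem V I) (k t : ℕ) : Prop :=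
  CondG1 G ∧ CondG2 G k t ∧ CondG3 E G ∧ CondG4 E G ∧ CondG5 E G k t

def CondG6 (E : V → V → Prop) [DecidableRel E] (G : GadgetSystem V I) (k t : ℕ) : Prop :=
  (Fintype.card V : ℝ) / 2 ≤ ((Vgood E G k t).card : ℝ)

def CondG7 (E : V → V → Prop) [DecidableRel E] (G : GadgetSystem V I) (k t τ₁ : ℕ) : Prop :=
  ∀ u ∈ Vokay G,
    max ((10 : ℝ) ^ 11 * ((VbadP E G k t).card : ℝ)) (((τ₁ * k * t : ℕ) : ℝ) / 2)
      ≤ ((outN E u ∩ VgoodP E G k t).card : ℝ)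

def CondG8 (E : V → V → Prop) [DecidableRel E] (G : GadgetSystem V I) (k t τ₁ : ℕ) : Prop :=
  ∀ u ∈ Vokay G,
    max ((10 : ℝ) ^ 11 * ((VbadM E G k t).card : ℝ)) (((τ₁ * k * t : ℕ) : ℝ) / 2)
      ≤ ((inN E u ∩ Vgood E G k t).card : ℝ)

def CondG9 (E : V → V → Prop) [DecidableRel E] (G : GadgetSystem V I) (k t τ₁ : ℕ) : Prop :=
  ∀ u : V,
    max ((10 : ℝ) ^ 11 * (((Finset.univ \ Vokay G).card : ℕ) : ℝ)) (((τ₁ * k * t : ℕ) : ℝ) / 2)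
      ≤ ((outN E u ∩ Vokay G).card : ℝ) ∧
    max ((10 : ℝ) ^ 11 * (((Finset.univ \ Vokay G).card : ℕ) : ℝ)) (((τ₁ * k * t : ℕ) : ℝ) / 2)
      ≤ ((inN E u ∩ Vokay G).card : ℝ)

/-- Properties (G6)–(G9) of a gadget system. -/
def GadgetHyp2 (E : V → V → Prop) [DecidableRel E] (G : GadgetSystem V I) (k t τ₁ : ℕ) :
    Prop :=
  CondG6 E G k t ∧ CondG7 E G k t τ₁ ∧ CondG8 E G k t τ₁ ∧ CondG9 E G k t τ₁

/-! ### Available vertices -/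

def AvailA1 (E : V → V → Prop) [DecidableRel E] (G : GadgetSystem V I) (k t : ℕ)
    (W : Finset V) (u : V) : Prop :=
  u ∈ Vgood E G k t ∩ W

def AvailA2 (E : V → V → Prop) [DecidableRel E] (G : GadgetSystem V I) (k t τ₂ : ℕ)
    (W : Finset V) (u : V) : Prop :=
  u ∈ (VgoodP E G k t \ VgoodM E G k t) ∩ W ∧
    ManyIn (inN E u) ((τ₂ * k * t : ℕ) : ℝ) (AvailA1 E G k t W)

def AvailA3 (E : V → V → Prop) [DecidableRel E] (G : GadgetSystem V I) (k t τ₂ : ℕ)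
    (W : Finset V) (u : V) : Prop :=
  u ∈ (VgoodM E G k t \ VgoodP E G k t) ∩ W ∧
    ManyIn (outN E u) ((τ₂ * k * t : ℕ) : ℝ)
      (fun v => AvailA1 E G k t W v ∨ AvailA2 E G k t τ₂ W v)

def AvailA4 (E : V → V → Prop) [DecidableRel E] (G : GadgetSystem V I) (k t τ₂ : ℕ)
    (W : Finset V) (u : V) : Prop :=
  u ∈ Vbad E G k t ∩ W ∧
    ManyIn (outN E u) ((τ₂ * k * t : ℕ) : ℝ)
      (fun v => AvailA1 E G k t W v ∨ AvailA2 E G k t τ₂ W v) ∧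
    ManyIn (inN E u) ((τ₂ * k * t : ℕ) : ℝ) (AvailA1 E G k t W)

/-- `u` is available (for `α`) with respect to a family `𝒜`, where `W = W(𝒜 ∖ {α})`. -/
def Available (E : V → V → Prop) [DecidableRel E] (G : GadgetSystem V I) (k t τ₂ : ℕ)
    (W : Finset V) (u : V) : Prop :=
  AvailA1 E G k t W u ∨ AvailA2 E G k t τ₂ W u ∨ AvailA3 E G k t τ₂ W u ∨
    AvailA4 E G k t τ₂ W u

/-! ### Eligible and helpful vertices -/

/-- Indices `α ∈ 𝒜` such that `u` has no out-neighbour in `S⁻(α)`. -/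
def MissOut (E : V → V → Prop) [DecidableRel E] (G : GadgetSystem V I) (𝒜 : Finset I)
    (u : V) : Finset I :=
  𝒜.filter fun α => ∀ v ∈ G.Sm α, ¬ E u v

/-- Indices `α ∈ 𝒜` such that `u` has no in-neighbour in `S⁺(α)`. -/
def MissIn (E : V → V → Prop) [DecidableRel E] (G : GadgetSystem V I) (𝒜 : Finset I)
    (u : V) : Finset I :=
  𝒜.filter fun α => ∀ v ∈ G.Sp α, ¬ E v u

def Nice1 (E : V → V → Prop) [DecidableRel E] (G : GadgetSystem V I) (k t : ℕ)
    (𝒜 : Finset I) (W : Finset V) (u : V) : Prop :=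
  u ∈ Vgood E G k t ∩ W ∧ (MissOut E G 𝒜 u).card ≤ k ∧ (MissIn E G 𝒜 u).card ≤ k

def Nice2 (E : V → V → Prop) [DecidableRel E] (G : GadgetSystem V I) (k t : ℕ) (m : ℝ)
    (𝒜 : Finset I) (W : Finset V) (u : V) : Prop :=
  u ∈ (VgoodP E G k t \ VgoodM E G k t) ∩ W ∧ (MissOut E G 𝒜 u).card ≤ k ∧
    ManyIn (inN E u) m (Nice1 E G k t 𝒜 W)

def Nice3 (E : V → V → Prop) [DecidableRel E] (G : GadgetSystem V I) (k t : ℕ) (m : ℝ)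
    (𝒜 : Finset I) (W : Finset V) (u : V) : Prop :=
  u ∈ (VgoodM E G k t \ VgoodP E G k t) ∩ W ∧ (MissIn E G 𝒜 u).card ≤ k ∧
    ManyIn (outN E u) m (fun v => Nice1 E G k t 𝒜 W v ∨ Nice2 E G k t m 𝒜 W v)

def Nice4 (E : V → V → Prop) [DecidableRel E] (G : GadgetSystem V I) (k t : ℕ) (m : ℝ)
    (𝒜 : Finset I) (W : Finset V) (u : V) : Prop :=
  u ∈ Vbad E G k t ∩ W ∧
    ManyIn (inN E u) m (Nice1 E G k t 𝒜 W) ∧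
    ManyIn (outN E u) m (fun v => Nice1 E G k t 𝒜 W v ∨ Nice2 E G k t m 𝒜 W v)

def NiceFor (E : V → V → Prop) [DecidableRel E] (G : GadgetSystem V I) (k t : ℕ) (m : ℝ)
    (𝒜 : Finset I) (W : Finset V) (u : V) : Prop :=
  Nice1 E G k t 𝒜 W u ∨ Nice2 E G k t m 𝒜 W u ∨ Nice3 E G k t m 𝒜 W u ∨
    Nice4 E G k t m 𝒜 W u

/-- `u` is eligible for `𝒜` in `W`. -/
def Eligible (E : V → V → Prop) [DecidableRel E] (G : GadgetSystem V I) (k t τ₃ : ℕ)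
    (𝒜 : Finset I) (W : Finset V) (u : V) : Prop :=
  NiceFor E G k t ((τ₃ * k * t : ℕ) : ℝ) 𝒜 W u

/-- `u` is helpful for `𝒜` in `W`. -/
def Helpful (E : V → V → Prop) [DecidableRel E] (G : GadgetSystem V I) (k t : ℕ)
    (𝒜 : Finset I) (W : Finset V) (u : V) : Prop :=
  NiceFor E G k t (k : ℝ) 𝒜 W u

end Defs

noncomputable def phi0 (τ₁ : ℕ) : ℝ := (τ₁ : ℝ) / 4
noncomputable def phi1 (τ₁ : ℕ) : ℝ := phi0 τ₁ / (2 ^ 6 * (rho : ℝ))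
noncomputable def phi2 (τ₁ : ℕ) : ℝ := phi1 τ₁ / (2 ^ 14 * (rho : ℝ) ^ 2)
noncomputable def phi3 (τ₁ : ℕ) : ℝ := phi2 τ₁ / (2 ^ 14 * (rho : ℝ) ^ 2)

/-- Integrability of `exp (t * Y)` for a two-valued random variable. -/
lemma aux_integrable_exp {Ω : Type*} [MeasurableSpace Ω] (μ : MeasureTheory.Measure Ω)
    [MeasureTheory.IsProbabilityMeasure μ] (Y : Ω → ℝ) (c t : ℝ)
    (hmeas : Measurable Y) (hval : ∀ ω, Y ω = 0 ∨ Y ω = c) :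
    MeasureTheory.Integrable (fun ω => Real.exp (t * Y ω)) μ := by
  refine MeasureTheory.Integrable.mono'
    (MeasureTheory.integrable_const (max 1 (Real.exp (t * c))))
    ((hmeas.const_mul t).exp.aestronglyMeasurable) (Filter.Eventually.of_forall fun ω => ?_)
  rcases hval ω with h | h <;> rw [h]
  · simp [abs_of_nonneg (Real.exp_pos _).le]
  · exact (abs_of_nonneg (Real.exp_pos _).le).le.trans (le_max_right _ _)

/-- mgf bound for a two-valued random variable taking value `c ≥ 0` with prob. ≥ 1/2. -/
lemma aux_mgf_le {Ω : Type*} [MeasurableSpace Ω] (μ : MeasureTheory.Measure Ω)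
    [MeasureTheory.IsProbabilityMeasure μ] (Y : Ω → ℝ) (c t : ℝ)
    (hc : 0 ≤ c) (ht : t ≤ 0) (hmeas : Measurable Y) (hval : ∀ ω, Y ω = 0 ∨ Y ω = c)
    (hp : (1 : ENNReal) / 2 ≤ μ {ω | Y ω = c}) :
    ProbabilityTheory.mgf Y μ t ≤ Real.exp (t * c / 2 + t ^ 2 * c ^ 2 / 8) := by
  set A : Set Ω := {ω | Y ω = c} with hA_def
  have hA : MeasurableSet A := hmeas (measurableSet_singleton c)
  have hint : MeasureTheory.Integrable (fun ω => Real.exp (t * Y ω)) μ :=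
    aux_integrable_exp μ Y c t hmeas hval
  set p : ℝ := (μ A).toReal with hp_def
  have hp1 : p ≤ 1 := by
    rw [hp_def]
    exact ENNReal.toReal_le_of_le_ofReal one_pos.le (by simpa using MeasureTheory.prob_le_one (μ := μ) (s := A))
  have hp2 : (1 : ℝ) / 2 ≤ p := by
    have := ENNReal.toReal_mono (MeasureTheory.measure_ne_top μ A) hp
    simpa using this
  have hmgf : ProbabilityTheory.mgf Y μ t = p * Real.exp (t * c) + (1 - p) := by
    rw [ProbabilityTheory.mgf, ← MeasureTheory.integral_add_compl hA hint]
    have h1 : ∫ ω in A, Real.exp (t * Y ω) ∂μ = (μ A).toReal * Real.exp (t * c) := by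
      rw [MeasureTheory.setIntegral_congr_fun hA
        (fun ω hω => by rw [show Y ω = c from hω]),
        MeasureTheory.setIntegral_const, smul_eq_mul, MeasureTheory.measureReal_def]
    have h2 : ∫ ω in Aᶜ, Real.exp (t * Y ω) ∂μ = (μ Aᶜ).toReal := by
      rw [MeasureTheory.setIntegral_congr_fun hA.compl
        (fun ω hω => by
          have h0 : Y ω = 0 := (hval ω).resolve_right hω
          rw [h0, mul_zero, Real.exp_zero]),
        MeasureTheory.setIntegral_const, smul_eq_mul, mul_one, MeasureTheory.measureReal_def]
    have h3 : (μ Aᶜ).toReal = 1 - p := by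
      rw [MeasureTheory.prob_compl_eq_one_sub hA, hp_def,
        ENNReal.toReal_sub_of_le MeasureTheory.prob_le_one (by simp)]
      simp
    rw [h1, h2, h3]
  have he1 : Real.exp (t * c) ≤ 1 := Real.exp_le_one_iff.mpr (mul_nonpos_of_nonpos_of_nonneg ht hc)
  have step1 : p * Real.exp (t * c) + (1 - p) ≤ (1 + Real.exp (t * c)) / 2 := by nlinarith
  have step2 : (1 + Real.exp (t * c)) / 2 =
      Real.exp (t * c / 2) * Real.cosh (t * c / 2) := by
    rw [Real.cosh_eq]
    have e1 : Real.exp (t * c / 2) * Real.exp (t * c / 2) = Real.exp (t * c) := by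
      rw [← Real.exp_add]; congr 1; ring
    have e2 : Real.exp (t * c / 2) * Real.exp (-(t * c / 2)) = 1 := by
      rw [← Real.exp_add]; simp
    linear_combination (- e1 - e2) / 2
  have step3 : Real.exp (t * c / 2) * Real.cosh (t * c / 2) ≤
      Real.exp (t * c / 2 + t ^ 2 * c ^ 2 / 8) := by
    rw [Real.exp_add]
    refine mul_le_mul_of_nonneg_left ?_ (Real.exp_pos _).le
    calc Real.cosh (t * c / 2) ≤ Real.exp ((t * c / 2) ^ 2 / 2) := Real.cosh_le_exp_half_sq _
      _ = Real.exp (t ^ 2 * c ^ 2 / 8) := by ring_nf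
  rw [hmgf]
  exact step1.trans (step2.le.trans step3)

/-- Proposition 3.1, a corollary of Hoeffding's inequality. -/
theorem statement1 {Ω : Type*} [MeasurableSpace Ω] (μ : MeasureTheory.Measure Ω)
    [MeasureTheory.IsProbabilityMeasure μ]
    (η₁ η₂ ℓ : ℝ) (hη : 4 * η₂ < η₁) (hη₂ : 0 < η₂) (hℓ : 0 < ℓ)
    (r : ℕ) (m : Fin r → ℝ) (hm0 : ∀ j, 0 ≤ m j) (hm1 : ∀ j, m j ≤ η₂ * ℓ)
    (hsum : η₁ * ℓ ≤ ∑ j, m j)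
    (X : Fin r → Ω → ℝ) (hXmeas : ∀ j, Measurable (X j))
    (hXval : ∀ j ω, X j ω = 0 ∨ X j ω = m j)
    (hXind : ProbabilityTheory.iIndepFun X μ)
    (hXprob : ∀ j, (1 : ENNReal) / 2 ≤ μ {ω | X j ω = m j}) :
    ENNReal.ofReal (1 - Real.exp (-η₁ / (8 * η₂))) ≤ μ {ω | η₂ * ℓ ≤ ∑ j, X j ω} := by
  classical
  set S : ℝ := ∑ j, m j with hS_def
  set Q : ℝ := ∑ j, (m j) ^ 2 with hQ_def
  set ε : ℝ := η₂ * ℓ with hε_def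
  have hη₁ : 0 < η₁ := by linarith
  have hSpos : 0 < S := lt_of_lt_of_le (by positivity) hsum
  have hQnn : 0 ≤ Q := Finset.sum_nonneg fun j _ => sq_nonneg _
  have hQ0 : 0 < Q := by
    rcases hQnn.lt_or_eq with h | h
    · exact h
    · exfalso
      have hall : ∀ j ∈ Finset.univ, (m j) ^ 2 = 0 :=
        (Finset.sum_eq_zero_iff_of_nonneg fun j _ => sq_nonneg _).mp h.symm
      have : S = 0 := Finset.sum_eq_zero fun j hj => pow_eq_zero_iff two_ne_zero |>.mp
        (hall j hj)
      linarith
  have hQle : Q ≤ ε * S := by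
    rw [hS_def, Finset.mul_sum]
    exact Finset.sum_le_sum fun j _ => by nlinarith [hm0 j, hm1 j]
  have hεpos : 0 < ε := by positivity
  have hεS : ε < S / 4 := by
    nlinarith [mul_lt_mul_of_pos_right hη (mul_pos hη₂ hℓ),
      mul_le_mul_of_nonneg_left hsum hη₂.le]
  set a : ℝ := S / 2 - ε with ha_def
  have ha : S / 4 < a := by rw [ha_def]; linarith
  have hapos : 0 < a := lt_trans (div_pos hSpos (by norm_num)) ha
  set t : ℝ := -(4 * a / Q) with ht_def
  clear_value S Q ε a t
  have ht : t ≤ 0 := by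
    rw [ht_def]
    exact neg_nonpos.mpr (by positivity)
  have hint : ∀ j, MeasureTheory.Integrable (fun ω => Real.exp (t * X j ω)) μ :=
    fun j => aux_integrable_exp μ (X j) (m j) t (hXmeas j) (hXval j)
  have hint_sum : MeasureTheory.Integrable
      (fun ω => Real.exp (t * (∑ j, X j) ω)) μ :=
    hXind.integrable_exp_mul_sum hXmeas fun j _ => hint j
  have hmgf_sum : ProbabilityTheory.mgf (∑ j, X j) μ t = ∏ j, ProbabilityTheory.mgf (X j) μ t :=
    hXind.mgf_sum hXmeas Finset.univ
  have hmgf_le : ProbabilityTheory.mgf (∑ j, X j) μ t ≤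
      Real.exp (t * S / 2 + t ^ 2 * Q / 8) := by
    rw [hmgf_sum]
    calc ∏ j, ProbabilityTheory.mgf (X j) μ t
        ≤ ∏ j, Real.exp (t * m j / 2 + t ^ 2 * (m j) ^ 2 / 8) :=
          Finset.prod_le_prod (fun j _ => ProbabilityTheory.mgf_nonneg)
            (fun j _ => aux_mgf_le μ (X j) (m j) t (hm0 j) ht (hXmeas j) (hXval j) (hXprob j))
      _ = Real.exp (∑ j, (t * m j / 2 + t ^ 2 * (m j) ^ 2 / 8)) := (Real.exp_sum _ _).symm
      _ = Real.exp (t * S / 2 + t ^ 2 * Q / 8) := by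
          congr 1
          rw [Finset.sum_add_distrib, hS_def, hQ_def]
          rw [← Finset.sum_div, ← Finset.mul_sum, ← Finset.sum_div]
          congr 1
          rw [Finset.mul_sum]
  have hchernoff := ProbabilityTheory.measure_le_le_exp_mul_mgf (X := ∑ j, X j) (μ := μ)
    ε ht hint_sum
  have hbound : (μ {ω | (∑ j, X j) ω ≤ ε}).toReal ≤ Real.exp (-η₁ / (8 * η₂)) := by
    refine hchernoff.trans ?_
    calc Real.exp (-t * ε) * ProbabilityTheory.mgf (∑ j, X j) μ t
        ≤ Real.exp (-t * ε) * Real.exp (t * S / 2 + t ^ 2 * Q / 8) :=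
          mul_le_mul_of_nonneg_left hmgf_le (Real.exp_pos _).le
      _ = Real.exp (-(2 * a ^ 2 / Q)) := by
          rw [← Real.exp_add]
          congr 1
          rw [ht_def, ha_def]
          field_simp
          ring
      _ ≤ Real.exp (-η₁ / (8 * η₂)) := by
          apply Real.exp_le_exp.mpr
          rw [neg_div, neg_le_neg_iff, div_le_div_iff₀ (by positivity) hQ0]
          have hS4 : S / 4 * (S / 4) ≤ a * a :=
            mul_le_mul ha.le ha.le (div_nonneg hSpos.le (by norm_num)) hapos.le
          have h1 : η₁ * Q ≤ η₁ * (ε * S) := mul_le_mul_of_nonneg_left hQle hη₁.le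
          have h2 : η₁ * (ε * S) = (η₁ * ℓ) * (η₂ * S) := by rw [hε_def]; ring
          have h3 : (η₁ * ℓ) * (η₂ * S) ≤ S * (η₂ * S) :=
            mul_le_mul_of_nonneg_right hsum (by positivity)
          have h4 : S * (η₂ * S) ≤ 16 * η₂ * a ^ 2 := by
            nlinarith [mul_le_mul_of_nonneg_left hS4 hη₂.le]
          linarith [h1, h2.le, h3, h4]
  have hμB : μ {ω | (∑ j, X j) ω ≤ ε} ≤ ENNReal.ofReal (Real.exp (-η₁ / (8 * η₂))) := by
    rw [← ENNReal.ofReal_toReal (MeasureTheory.measure_ne_top μ _)]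
    exact ENNReal.ofReal_le_ofReal hbound
  have hcover : (1 : ENNReal) ≤ μ {ω | (∑ j, X j) ω ≤ ε} + μ {ω | ε ≤ ∑ j, X j ω} := by
    have hsub : (Set.univ : Set Ω) ⊆
        {ω | (∑ j, X j) ω ≤ ε} ∪ {ω | ε ≤ ∑ j, X j ω} := by
      intro ω _
      rcases le_total ((∑ j, X j) ω) ε with h | h
      · exact Or.inl h
      · exact Or.inr (by simpa [Finset.sum_apply] using h)
    calc (1 : ENNReal) = μ Set.univ := (MeasureTheory.measure_univ).symm
      _ ≤ μ ({ω | (∑ j, X j) ω ≤ ε} ∪ {ω | ε ≤ ∑ j, X j ω}) := MeasureTheory.measure_mono hsub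
      _ ≤ _ := MeasureTheory.measure_union_le _ _
  have h1 : ENNReal.ofReal (1 - Real.exp (-η₁ / (8 * η₂))) ≤
      1 - μ {ω | (∑ j, X j) ω ≤ ε} := by
    calc ENNReal.ofReal (1 - Real.exp (-η₁ / (8 * η₂)))
        = 1 - ENNReal.ofReal (Real.exp (-η₁ / (8 * η₂))) := by
          rw [ENNReal.ofReal_sub _ (Real.exp_pos _).le, ENNReal.ofReal_one]
      _ ≤ 1 - μ {ω | (∑ j, X j) ω ≤ ε} := tsub_le_tsub_left hμB _
  refine h1.trans ?_
  exact tsub_le_iff_right.mpr (by rwa [add_comm] at hcover)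

end TournamentPartition
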